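/- (Generalization bound with joint distributions on multiple source domains, Theorem A.3.) Let X be a measurable space and Y = {−1, 1}. Let M be a countable set of measurable functions from X × Y to {−1, 1}. Let N ≥ 1, and for each i ∈ {1, …, N} let P_i be a probability measure on X and κ_i a Markov kernel from X to Y; let P_T be a probability measure on X and κ_T a Markov kernel from X to Y. Let π_1, …, π_N ≥ 0 with Σ_i π_i = 1, and let κ̄ be a Markov kernel from X to Y satisfying Σ_i π_i (P_i ⊗ κ_i) = (Σ_i π_i P_i) ⊗ κ̄. Let H be a nonempty set of measurable hypotheses, and let h be a measurable hypothesis with m_h ∈ M and the constant function 1 ∈ M. Define ζ_in := max_{1 ≤ i, j ≤ N} d^{κ_i}_{M△M}(P_i, P_j), η_in := max_{1 ≤ i, j ≤ N} ∫_X D_M(κ_i, κ_j)(x) dP_j(x), ζ_out := d^{κ̄}_{M△M}(Σ_i π_i P_i, P_T), η_out := ∫_X D_M(κ̄, κ_T)(x) dP_T(x), and λ_π := inf_{h' ∈ H} ( Σ_i π_i ε_{P_i ⊗ κ_i}(h') + ε_{P_T ⊗ κ_T}(h') ). Then ε_{P_T ⊗ κ_T}(h) ≤ Σ_i π_i ε_{P_i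 ⊗ κ_i}(h) + ζ_in + η_in + ζ_out + η_out + λ_π. -/

import Mathlib

open MeasureTheory ProbabilityTheory
open scoped ENNReal NNReal

noncomputable section

namespace IDG

variable {X : Type*} [MeasurableSpace X]

/-- The risk of a hypothesis `h : X → ℤˣ` (values in `{-1, 1}`) with respect to a joint
distribution `μ` on `X × ℤˣ`: the measure of the error set `{(x, y) | h x ≠ y}`. -/
def risk (μ : Measure (X × ℤˣ)) (h : X → ℤˣ) : ℝ :=
  (μ {z : X × ℤˣ | h z.1 ≠ z.2}).toReal

/-- The symmetric-difference set `A(m, m') = {z | m z ≠ m' z}`. -/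
def errSet (m m' : X × ℤˣ → ℤˣ) : Set (X × ℤˣ) := {z | m z ≠ m' z}

/-- The `x`-section of `A(m, m')`. -/
def xsec (m m' : X × ℤˣ → ℤˣ) (x : X) : Set ℤˣ := {y | m (x, y) ≠ m' (x, y)}

/-- The `M△M`-divergence between two measures on `X × ℤˣ`. -/
def dMM (M : Set (X × ℤˣ → ℤˣ)) (μ ν : Measure (X × ℤˣ)) : ℝ :=
  ⨆ m : M, ⨆ m' : M, |(μ (errSet m.1 m'.1)).toReal - (ν (errSet m.1 m'.1)).toReal|

/-- The `κ`-weighted `M△M`-divergence between two measures on `X`. -/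
def dMMker (M : Set (X × ℤˣ → ℤˣ)) (κ : Kernel X ℤˣ) (P Q : Measure X) : ℝ :=
  ⨆ m : M, ⨆ m' : M,
    |(∫ x, (κ x (xsec m.1 m'.1 x)).toReal ∂P) - (∫ x, (κ x (xsec m.1 m'.1 x)).toReal ∂Q)|

/-- Pointwise posterior discrepancy between two kernels. -/
def DM (M : Set (X × ℤˣ → ℤˣ)) (κ κ' : Kernel X ℤˣ) (x : X) : ℝ :=
  ⨆ m : M, ⨆ m' : M, |(κ x (xsec m.1 m'.1 x)).toReal - (κ' x (xsec m.1 m'.1 x)).toReal|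

/-- **Generalization bound with joint distributions on multiple source domains (Theorem A.3).** -/
instance : MeasurableSingletonClass ℤˣ := by
  constructor; intro u
  refine ⟨{(u : ℤ)}, trivial, ?_⟩
  ext v; simp [Units.ext_iff]

lemma le_iSup2 {ι : Type*} (f : ι → ι → ℝ) (C : ℝ) (hC : ∀ a b, f a b ≤ C) (a b : ι) :
    f a b ≤ ⨆ x, ⨆ y, f x y := by
  haveI : Nonempty ι := ⟨a⟩
  have hb : ∀ x, BddAbove (Set.range fun y => f x y) := fun x =>
    ⟨C, by rintro _ ⟨y, rfl⟩; exact hC x y⟩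
  refine (le_ciSup (hb a) b).trans (le_ciSup (f := fun x => ⨆ y, f x y) ?_ a)
  refine ⟨C, ?_⟩
  rintro _ ⟨x, rfl⟩
  exact ciSup_le fun y => hC x y

lemma toReal_prob_le_one {Ω : Type*} [MeasurableSpace Ω] (μ : Measure Ω)
    [IsProbabilityMeasure μ] (s : Set Ω) : (μ s).toReal ≤ 1 := by
  simpa using ENNReal.toReal_mono ENNReal.one_ne_top (prob_le_one (μ := μ) (s := s))

lemma units_int_mul_eq_one_iff (u a : ℤˣ) : u * a = 1 ↔ a = u := by
  constructor
  · intro hua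
    have h1 : u⁻¹ = a := inv_eq_of_mul_eq_one_right hua
    have h2 : u⁻¹ = u := inv_eq_of_mul_eq_one_right (Int.units_mul_self u)
    rw [← h1, h2]
  · rintro rfl; exact Int.units_mul_self _

theorem multi_source_generalization_bound
    {N : ℕ} (hN : 1 ≤ N)
    (M : Set (X × ℤˣ → ℤˣ)) (hMcount : M.Countable) (hMmeas : ∀ m ∈ M, Measurable m)
    (P : Fin N → Measure X) (hP : ∀ i, IsProbabilityMeasure (P i))
    (κ : Fin N → Kernel X ℤˣ) (hκ : ∀ i, IsMarkovKernel (κ i))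
    (PT : Measure X) (hPT : IsProbabilityMeasure PT)
    (κT : Kernel X ℤˣ) (hκT : IsMarkovKernel κT)
    (π : Fin N → ℝ≥0) (hπ : ∑ i, π i = 1)
    (κbar : Kernel X ℤˣ) (hκbar : IsMarkovKernel κbar)
    (hmix : (∑ i, (π i : ℝ≥0∞) • (P i ⊗ₘ κ i)) = (∑ i, (π i : ℝ≥0∞) • P i) ⊗ₘ κbar)
    (H : Set (X → ℤˣ)) (hH : H.Nonempty) (hHmeas : ∀ h' ∈ H, Measurable h')
    (h : X → ℤˣ) (hmeas : Measurable h)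
    (hmh : (fun z : X × ℤˣ => z.2 * h z.1) ∈ M)
    (hone : (fun _ : X × ℤˣ => (1 : ℤˣ)) ∈ M) :
    risk (PT ⊗ₘ κT) h ≤
      (∑ i, (π i : ℝ) * risk (P i ⊗ₘ κ i) h)
      + (⨆ i, ⨆ j, dMMker M (κ i) (P i) (P j))
      + (⨆ i, ⨆ j, ∫ x, DM M (κ i) (κ j) x ∂(P j))
      + dMMker M κbar (∑ i, (π i : ℝ≥0∞) • P i) PT
      + (∫ x, DM M κbar κT x ∂PT)
      + (⨅ h' : H, ((∑ i, (π i : ℝ) * risk (P i ⊗ₘ κ i) h'.1) + risk (PT ⊗ₘ κT) h'.1)) := by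
  haveI := hMcount.to_subtype
  haveI : Nonempty M := ⟨⟨_, hone⟩⟩
  set mhf : X × ℤˣ → ℤˣ := fun z : X × ℤˣ => z.2 * h z.1 with hmhf
  set onef : X × ℤˣ → ℤˣ := fun _ : X × ℤˣ => (1 : ℤˣ) with honef
  set E : Set (X × ℤˣ) := {z : X × ℤˣ | h z.1 ≠ z.2} with hEdef
  set Pmix : Measure X := ∑ i, (π i : ℝ≥0∞) • P i with hPmix
  haveI : IsProbabilityMeasure Pmix := by
    constructor
    rw [hPmix]
    simp only [Measure.coe_finset_sum, Finset.sum_apply, Measure.smul_apply, measure_univ,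
      smul_eq_mul, mul_one]
    rw [← ENNReal.coe_finset_sum, hπ, ENNReal.coe_one]
  -- basic set facts
  have hEset : errSet mhf onef = E := by
    ext z
    show z.2 * h z.1 ≠ 1 ↔ h z.1 ≠ z.2
    exact not_congr (units_int_mul_eq_one_iff z.2 (h z.1))
  have hEmeas : MeasurableSet E :=
    (measurableSet_eq_fun (hmeas.comp measurable_fst) measurable_snd).compl
  have hErrMeas : ∀ m ∈ M, ∀ m' ∈ M, MeasurableSet (errSet m m') := fun m hm m' hm' =>
    (measurableSet_eq_fun (hMmeas m hm) (hMmeas m' hm')).compl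
  have hxsec : ∀ (m m' : X × ℤˣ → ℤˣ) (x : X), Prod.mk x ⁻¹' errSet m m' = xsec m m' x :=
    fun _ _ _ => rfl
  have hSx : ∀ x : X, Prod.mk x ⁻¹' E = xsec mhf onef x := by
    intro x; rw [← hEset]; exact hxsec mhf onef x
  -- measurability and bounds for kernel section functions
  have measg : ∀ (κ' : Kernel X ℤˣ), IsMarkovKernel κ' → ∀ (m m' : X × ℤˣ → ℤˣ), m ∈ M → m' ∈ M →
      Measurable fun x => (κ' x (xsec m m' x)).toReal := by
    intro κ' hκ' m m' hm hm'
    haveI := hκ'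
    have := Kernel.measurable_kernel_prodMk_left (κ := κ') (hErrMeas m hm m' hm')
    exact this.ennreal_toReal
  have gnn : ∀ (κ' : Kernel X ℤˣ) (s : X → Set ℤˣ) (x : X), (0:ℝ) ≤ (κ' x (s x)).toReal :=
    fun _ _ _ => ENNReal.toReal_nonneg
  have gle1 : ∀ (κ' : Kernel X ℤˣ), IsMarkovKernel κ' → ∀ (s : X → Set ℤˣ) (x : X),
      (κ' x (s x)).toReal ≤ 1 := by
    intro κ' hκ' s x
    exact toReal_prob_le_one (κ' x) (s x)
  have intg : ∀ (κ' : Kernel X ℤˣ), IsMarkovKernel κ' → ∀ (Q : Measure X), IsProbabilityMeasure Q →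
      ∀ (m m' : X × ℤˣ → ℤˣ), m ∈ M → m' ∈ M →
      Integrable (fun x => (κ' x (xsec m m' x)).toReal) Q := by
    intro κ' hκ' Q hQ m m' hm hm'
    haveI := hκ'; haveI := hQ
    refine (integrable_const (1:ℝ)).mono' (measg κ' hκ' m m' hm hm').aestronglyMeasurable ?_
    refine Filter.Eventually.of_forall fun x => ?_
    rw [Real.norm_eq_abs, abs_of_nonneg (gnn κ' _ x)]
    exact gle1 κ' hκ' _ x
  -- DM facts
  have DMnn : ∀ (κ₁ κ₂ : Kernel X ℤˣ) (x : X), 0 ≤ DM M κ₁ κ₂ x := by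
    intro κ₁ κ₂ x
    exact Real.iSup_nonneg fun m => Real.iSup_nonneg fun m' => abs_nonneg _
  have DMle1 : ∀ (κ₁ κ₂ : Kernel X ℤˣ), IsMarkovKernel κ₁ → IsMarkovKernel κ₂ → ∀ x : X,
      DM M κ₁ κ₂ x ≤ 1 := by
    intro κ₁ κ₂ h₁ h₂ x
    refine Real.iSup_le (fun m => Real.iSup_le (fun m' => ?_) zero_le_one) zero_le_one
    rw [abs_le]
    constructor
    · have := gle1 κ₂ h₂ (fun x => xsec m.1 m'.1 x) x
      have := gnn κ₁ (fun x => xsec m.1 m'.1 x) x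
      linarith
    · have := gle1 κ₁ h₁ (fun x => xsec m.1 m'.1 x) x
      have := gnn κ₂ (fun x => xsec m.1 m'.1 x) x
      linarith
  have DMmeas : ∀ (κ₁ κ₂ : Kernel X ℤˣ), IsMarkovKernel κ₁ → IsMarkovKernel κ₂ →
      Measurable (DM M κ₁ κ₂) := by
    intro κ₁ κ₂ h₁ h₂
    unfold DM
    exact Measurable.iSup fun m => Measurable.iSup fun m' =>
      ((measg κ₁ h₁ m.1 m'.1 m.2 m'.2).sub (measg κ₂ h₂ m.1 m'.1 m.2 m'.2)).abs
  have DMint : ∀ (κ₁ κ₂ : Kernel X ℤˣ), IsMarkovKernel κ₁ → IsMarkovKernel κ₂ →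
      ∀ (Q : Measure X), IsProbabilityMeasure Q → Integrable (DM M κ₁ κ₂) Q := by
    intro κ₁ κ₂ h₁ h₂ Q hQ
    haveI := hQ
    refine (integrable_const (1:ℝ)).mono' (DMmeas κ₁ κ₂ h₁ h₂).aestronglyMeasurable ?_
    refine Filter.Eventually.of_forall fun x => ?_
    rw [Real.norm_eq_abs, abs_of_nonneg (DMnn κ₁ κ₂ x)]
    exact DMle1 κ₁ κ₂ h₁ h₂ x
  -- risk as integral
  have riskInt : ∀ (Q : Measure X), IsProbabilityMeasure Q → ∀ (κ' : Kernel X ℤˣ),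
      IsMarkovKernel κ' →
      risk (Q ⊗ₘ κ') h = ∫ x, (κ' x (xsec mhf onef x)).toReal ∂Q := by
    intro Q hQ κ' hκ'
    haveI := hQ; haveI := hκ'
    rw [risk, ← hEdef, Measure.compProd_apply hEmeas, ← integral_toReal]
    · exact integral_congr_ae (Filter.Eventually.of_forall fun x => by
        show (κ' x (Prod.mk x ⁻¹' E)).toReal = (κ' x (xsec mhf onef x)).toReal
        rw [hSx x])
    · exact (Kernel.measurable_kernel_prodMk_left hEmeas).aemeasurable
    · exact Filter.Eventually.of_forall fun x =>
        lt_of_le_of_lt prob_le_one ENNReal.one_lt_top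
  -- Step B : target risk vs κbar on PT
  have stepB : risk (PT ⊗ₘ κT) h ≤
      (∫ x, (κbar x (xsec mhf onef x)).toReal ∂PT) + ∫ x, DM M κbar κT x ∂PT := by
    rw [riskInt PT hPT κT hκT]
    have hpt : ∀ x, (κT x (xsec mhf onef x)).toReal ≤
        (κbar x (xsec mhf onef x)).toReal + DM M κbar κT x := by
      intro x
      have key : |(κbar x (xsec mhf onef x)).toReal - (κT x (xsec mhf onef x)).toReal| ≤
          DM M κbar κT x := by
        refine le_iSup2 (fun m m' : M =>
          |(κbar x (xsec m.1 m'.1 x)).toReal - (κT x (xsec m.1 m'.1 x)).toReal|) 1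
          (fun a b => ?_) ⟨mhf, hmh⟩ ⟨onef, hone⟩
        rw [abs_le]
        constructor
        · have := gle1 κT hκT (fun x => xsec a.1 b.1 x) x
          have := gnn κbar (fun x => xsec a.1 b.1 x) x
          linarith
        · have := gle1 κbar hκbar (fun x => xsec a.1 b.1 x) x
          have := gnn κT (fun x => xsec a.1 b.1 x) x
          linarith
      have := neg_abs_le ((κbar x (xsec mhf onef x)).toReal - (κT x (xsec mhf onef x)).toReal)
      linarith [abs_nonneg ((κbar x (xsec mhf onef x)).toReal - (κT x (xsec mhf onef x)).toReal),
        le_abs_self ((κbar x (xsec mhf onef x)).toReal - (κT x (xsec mhf onef x)).toReal), key]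
    calc ∫ x, (κT x (xsec mhf onef x)).toReal ∂PT
        ≤ ∫ x, ((κbar x (xsec mhf onef x)).toReal + DM M κbar κT x) ∂PT := by
          refine integral_mono (intg κT hκT PT hPT mhf onef hmh hone)
            ((intg κbar hκbar PT hPT mhf onef hmh hone).add
              (DMint κbar κT hκbar hκT PT hPT)) hpt
      _ = (∫ x, (κbar x (xsec mhf onef x)).toReal ∂PT) + ∫ x, DM M κbar κT x ∂PT :=
          integral_add (intg κbar hκbar PT hPT mhf onef hmh hone) (DMint κbar κT hκbar hκT PT hPT)
  -- Step C : change measure PT → Pmix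
  have stepC : (∫ x, (κbar x (xsec mhf onef x)).toReal ∂PT) ≤
      (∫ x, (κbar x (xsec mhf onef x)).toReal ∂Pmix) + dMMker M κbar Pmix PT := by
    have key : |(∫ x, (κbar x (xsec mhf onef x)).toReal ∂Pmix) -
        (∫ x, (κbar x (xsec mhf onef x)).toReal ∂PT)| ≤ dMMker M κbar Pmix PT := by
      refine le_iSup2 (fun m m' : M =>
        |(∫ x, (κbar x (xsec m.1 m'.1 x)).toReal ∂Pmix) -
          (∫ x, (κbar x (xsec m.1 m'.1 x)).toReal ∂PT)|) 1 (fun a b => ?_) ⟨mhf, hmh⟩ ⟨onef, hone⟩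
      have bnd : ∀ (Q : Measure X), IsProbabilityMeasure Q →
          (0:ℝ) ≤ (∫ x, (κbar x (xsec a.1 b.1 x)).toReal ∂Q) ∧
          (∫ x, (κbar x (xsec a.1 b.1 x)).toReal ∂Q) ≤ 1 := by
        intro Q hQ
        haveI := hQ
        constructor
        · exact integral_nonneg fun x => ENNReal.toReal_nonneg
        · calc (∫ x, (κbar x (xsec a.1 b.1 x)).toReal ∂Q) ≤ ∫ _, (1:ℝ) ∂Q :=
              integral_mono (intg κbar hκbar Q hQ a.1 b.1 a.2 b.2) (integrable_const 1)
                (fun x => gle1 κbar hκbar _ x)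
          _ = 1 := by simp
      obtain ⟨h1, h2⟩ := bnd Pmix ‹_›
      obtain ⟨h3, h4⟩ := bnd PT hPT
      rw [abs_le]; constructor <;> linarith
    have := le_abs_self ((∫ x, (κbar x (xsec mhf onef x)).toReal ∂Pmix) -
        (∫ x, (κbar x (xsec mhf onef x)).toReal ∂PT))
    have := neg_abs_le ((∫ x, (κbar x (xsec mhf onef x)).toReal ∂Pmix) -
        (∫ x, (κbar x (xsec mhf onef x)).toReal ∂PT))
    linarith
  -- Step D : mixture identity
  have stepD : (∫ x, (κbar x (xsec mhf onef x)).toReal ∂Pmix) =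
      ∑ i, (π i : ℝ) * risk (P i ⊗ₘ κ i) h := by
    have h1 : (∫ x, (κbar x (xsec mhf onef x)).toReal ∂Pmix) = ((Pmix ⊗ₘ κbar) E).toReal :=
      (riskInt Pmix ‹_› κbar hκbar).symm
    have h2 : (Pmix ⊗ₘ κbar) E = ∑ i, (π i : ℝ≥0∞) * (P i ⊗ₘ κ i) E := by
      rw [← hmix]
      simp [Measure.coe_finset_sum, Measure.smul_apply, smul_eq_mul]
    rw [h1, h2, ENNReal.toReal_sum]
    · refine Finset.sum_congr rfl fun i _ => ?_
      haveI := hP i; haveI := hκ i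
      rw [ENNReal.toReal_mul]
      simp only [ENNReal.coe_toReal]
      rfl
    · intro i _
      haveI := hP i; haveI := hκ i
      exact ENNReal.mul_ne_top ENNReal.coe_ne_top (measure_ne_top _ _)
  -- nonnegativity of remaining terms
  have hζin : 0 ≤ ⨆ i, ⨆ j, dMMker M (κ i) (P i) (P j) :=
    Real.iSup_nonneg fun i => Real.iSup_nonneg fun j =>
      Real.iSup_nonneg fun m => Real.iSup_nonneg fun m' => abs_nonneg _
  have hηin : 0 ≤ ⨆ i, ⨆ j, ∫ x, DM M (κ i) (κ j) x ∂(P j) :=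
    Real.iSup_nonneg fun i => Real.iSup_nonneg fun j =>
      integral_nonneg fun x => DMnn _ _ x
  have hlam : 0 ≤ ⨅ h' : H, ((∑ i, (π i : ℝ) * risk (P i ⊗ₘ κ i) h'.1) + risk (PT ⊗ₘ κT) h'.1) := by
    refine Real.iInf_nonneg fun h' => ?_
    have ha : 0 ≤ ∑ i, (π i : ℝ) * risk (P i ⊗ₘ κ i) h'.1 :=
      Finset.sum_nonneg fun i _ => mul_nonneg (π i).coe_nonneg ENNReal.toReal_nonneg
    have hb : (0:ℝ) ≤ risk (PT ⊗ₘ κT) h'.1 := ENNReal.toReal_nonneg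
    linarith
  rw [stepD] at stepC
  linarith [stepB, stepC, hζin, hηin, hlam]

end IDG
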